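/- Fix η > 0, β > 0, δ ≥ 0, and an integer τ ≥ 0, and regard A, B, E, F, and hence h_γ(τ), as functions of the momentum factor γ ∈ (0,1). Then as γ → 0⁺: γA → 1 + ηβ, γB → 0, E → 1/(ηβ), F → 0, and h_γ(τ) → (δ/β)((1 + ηβ)^τ − 1) − ηδτ, i.e., the MFL gap function converges to the FL gap function h_FL(τ). -/

import Mathlib

open Filter Topology

/-- As γ → 0⁺ (with η, β, δ, τ fixed): `γA → 1 + ηβ`, `γB → 0`,
`E → 1/(ηβ)`, `F → 0`, and the MFL gap function `h_γ(τ)` converges to the FL gap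
function `h_FL(τ) = (δ/β)((1 + ηβ)^τ − 1) − ηδτ`. -/
theorem mfl_gap_tends_to_fl_gap
    (η β δ : ℝ) (hη : 0 < η) (hβ : 0 < β) (hδ : 0 ≤ δ) (τ : ℕ)
    (A B E F : ℝ → ℝ) (h : ℝ → ℕ → ℝ)
    (hA : ∀ γ : ℝ, A γ =
      ((1 + γ + η * β) + Real.sqrt ((1 + γ + η * β) ^ 2 - 4 * γ)) / (2 * γ))
    (hB : ∀ γ : ℝ, B γ =
      ((1 + γ + η * β) - Real.sqrt ((1 + γ + η * β) ^ 2 - 4 * γ)) / (2 * γ))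
    (hE : ∀ γ : ℝ, E γ = A γ / ((A γ - B γ) * (γ * A γ - 1)))
    (hF : ∀ γ : ℝ, F γ = B γ / ((A γ - B γ) * (1 - γ * B γ)))
    (hh : ∀ γ : ℝ, ∀ x : ℕ, h γ x = η * δ *
      (E γ * (γ * A γ) ^ x + F γ * (γ * B γ) ^ x - 1 / (η * β) -
        (γ * (γ ^ x - 1) - (γ - 1) * (x : ℝ)) / (γ - 1) ^ 2)) :
    Tendsto (fun γ : ℝ => γ * A γ) (𝓝[>] 0) (𝓝 (1 + η * β)) ∧
    Tendsto (fun γ : ℝ => γ * B γ) (𝓝[>] 0) (𝓝 0) ∧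
    Tendsto E (𝓝[>] 0) (𝓝 (1 / (η * β))) ∧
    Tendsto F (𝓝[>] 0) (𝓝 0) ∧
    Tendsto (fun γ : ℝ => h γ τ) (𝓝[>] 0)
      (𝓝 (δ / β * ((1 + η * β) ^ τ - 1) - η * δ * (τ : ℝ))) := by
  have hηβ : (0:ℝ) < η * β := mul_pos hη hβ
  have hpos : ∀ᶠ γ : ℝ in 𝓝[>] 0, (0:ℝ) < γ := self_mem_nhdsWithin
  -- limit of the square root term
  have hsq : Tendsto (fun γ : ℝ => Real.sqrt ((1 + γ + η * β) ^ 2 - 4 * γ))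
      (𝓝[>] 0) (𝓝 (1 + η * β)) := by
    have hc : Tendsto (fun γ : ℝ => Real.sqrt ((1 + γ + η * β) ^ 2 - 4 * γ))
        (𝓝 0) (𝓝 (Real.sqrt ((1 + 0 + η * β) ^ 2 - 4 * 0))) := by
      exact (Real.continuous_sqrt.comp (by continuity)).tendsto 0
    have h0 : Real.sqrt ((1 + (0:ℝ) + η * β) ^ 2 - 4 * 0) = 1 + η * β := by
      rw [show (1 + (0:ℝ) + η * β) ^ 2 - 4 * 0 = (1 + η * β)^2 by ring,
        Real.sqrt_sq (by positivity)]
    rw [h0] at hc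
    exact hc.mono_left nhdsWithin_le_nhds
  have hlin : Tendsto (fun γ : ℝ => 1 + γ + η * β) (𝓝[>] 0) (𝓝 (1 + η * β)) := by
    have : Tendsto (fun γ : ℝ => 1 + γ + η * β) (𝓝 0) (𝓝 (1 + 0 + η * β)) :=
      Continuous.tendsto (by continuity) 0
    rw [show (1:ℝ) + 0 + η * β = 1 + η * β by ring] at this
    exact this.mono_left nhdsWithin_le_nhds
  -- γA
  have tA : Tendsto (fun γ : ℝ => γ * A γ) (𝓝[>] 0) (𝓝 (1 + η * β)) := by
    have heq : ∀ᶠ γ : ℝ in 𝓝[>] 0, ((1 + γ + η * β) +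
        Real.sqrt ((1 + γ + η * β) ^ 2 - 4 * γ)) / 2 = γ * A γ := by
      filter_upwards [hpos] with γ hγ
      rw [hA]
      field_simp
    have : Tendsto (fun γ : ℝ => ((1 + γ + η * β) +
        Real.sqrt ((1 + γ + η * β) ^ 2 - 4 * γ)) / 2) (𝓝[>] 0)
        (𝓝 (((1 + η * β) + (1 + η * β)) / 2)) := (hlin.add hsq).div_const 2
    rw [show ((1 + η * β) + (1 + η * β)) / 2 = 1 + η * β by ring] at this
    exact this.congr' heq
  -- γB
  have tB : Tendsto (fun γ : ℝ => γ * B γ) (𝓝[>] 0) (𝓝 0) := by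
    have heq : ∀ᶠ γ : ℝ in 𝓝[>] 0, ((1 + γ + η * β) -
        Real.sqrt ((1 + γ + η * β) ^ 2 - 4 * γ)) / 2 = γ * B γ := by
      filter_upwards [hpos] with γ hγ
      rw [hB]
      field_simp
    have : Tendsto (fun γ : ℝ => ((1 + γ + η * β) -
        Real.sqrt ((1 + γ + η * β) ^ 2 - 4 * γ)) / 2) (𝓝[>] 0)
        (𝓝 (((1 + η * β) - (1 + η * β)) / 2)) := (hlin.sub hsq).div_const 2
    rw [show ((1 + η * β) - (1 + η * β)) / 2 = 0 by ring] at this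
    exact this.congr' heq
  -- E
  have tE : Tendsto E (𝓝[>] 0) (𝓝 (1 / (η * β))) := by
    have heq : ∀ᶠ γ : ℝ in 𝓝[>] 0,
        (γ * A γ) / ((γ * A γ - γ * B γ) * (γ * A γ - 1)) = E γ := by
      filter_upwards [hpos] with γ hγ
      rw [hE, show (γ * A γ - γ * B γ) * (γ * A γ - 1)
        = γ * ((A γ - B γ) * (γ * A γ - 1)) by ring,
        mul_div_mul_left _ _ (ne_of_gt hγ)]
    have hne : ((1 + η * β) - 0) * ((1 + η * β) - 1) ≠ 0 := by
      rw [show ((1 + η * β) - 0) * ((1 + η * β) - 1) = (1 + η * β) * (η * β) by ring]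
      positivity
    have : Tendsto (fun γ : ℝ => (γ * A γ) / ((γ * A γ - γ * B γ) * (γ * A γ - 1)))
        (𝓝[>] 0) (𝓝 ((1 + η * β) / (((1 + η * β) - 0) * ((1 + η * β) - 1)))) :=
      tA.div ((tA.sub tB).mul (tA.sub tendsto_const_nhds)) hne
    rw [show (1 + η * β) / (((1 + η * β) - 0) * ((1 + η * β) - 1)) = 1 / (η * β) by
      rw [sub_zero, add_sub_cancel_left, div_mul_eq_div_div, div_self (by positivity)]] at this
    exact this.congr' heq
  -- F
  have tF : Tendsto F (𝓝[>] 0) (𝓝 0) := by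
    have heq : ∀ᶠ γ : ℝ in 𝓝[>] 0,
        (γ * B γ) / ((γ * A γ - γ * B γ) * (1 - γ * B γ)) = F γ := by
      filter_upwards [hpos] with γ hγ
      rw [hF, show (γ * A γ - γ * B γ) * (1 - γ * B γ)
        = γ * ((A γ - B γ) * (1 - γ * B γ)) by ring,
        mul_div_mul_left _ _ (ne_of_gt hγ)]
    have hne : ((1 + η * β) - 0) * (1 - 0) ≠ 0 := by
      rw [show ((1 + η * β) - 0) * (1 - (0:ℝ)) = 1 + η * β by ring]
      positivity
    have : Tendsto (fun γ : ℝ => (γ * B γ) / ((γ * A γ - γ * B γ) * (1 - γ * B γ)))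
        (𝓝[>] 0) (𝓝 (0 / (((1 + η * β) - 0) * (1 - 0)))) :=
      tB.div ((tA.sub tB).mul (tendsto_const_nhds.sub tB)) hne
    rw [zero_div] at this
    exact this.congr' heq
  refine ⟨tA, tB, tE, tF, ?_⟩
  -- h
  have tpoly : Tendsto (fun γ : ℝ => (γ * (γ ^ τ - 1) - (γ - 1) * (τ : ℝ)) / (γ - 1) ^ 2)
      (𝓝[>] 0) (𝓝 (τ : ℝ)) := by
    have hnum : Tendsto (fun γ : ℝ => γ * (γ ^ τ - 1) - (γ - 1) * (τ : ℝ)) (𝓝 (0:ℝ))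
        (𝓝 (0 * ((0:ℝ) ^ τ - 1) - ((0:ℝ) - 1) * (τ : ℝ))) :=
      (tendsto_id.mul ((tendsto_id.pow τ).sub tendsto_const_nhds)).sub
        ((tendsto_id.sub tendsto_const_nhds).mul tendsto_const_nhds)
    have hden : Tendsto (fun γ : ℝ => (γ - 1) ^ 2) (𝓝 (0:ℝ)) (𝓝 (((0:ℝ) - 1) ^ 2)) :=
      (tendsto_id.sub tendsto_const_nhds).pow 2
    have hc := hnum.div hden (by norm_num)
    rw [show (0 * ((0:ℝ) ^ τ - 1) - ((0:ℝ) - 1) * (τ : ℝ)) / ((0:ℝ) - 1) ^ 2 = (τ : ℝ) by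
      norm_num] at hc
    exact hc.mono_left nhdsWithin_le_nhds
  have tmain : Tendsto (fun γ : ℝ => η * δ *
      (E γ * (γ * A γ) ^ τ + F γ * (γ * B γ) ^ τ - 1 / (η * β) -
        (γ * (γ ^ τ - 1) - (γ - 1) * (τ : ℝ)) / (γ - 1) ^ 2)) (𝓝[>] 0)
      (𝓝 (η * δ * (1 / (η * β) * (1 + η * β) ^ τ + 0 * (0:ℝ) ^ τ - 1 / (η * β) - (τ : ℝ)))) :=
    tendsto_const_nhds.mul
      ((((tE.mul (tA.pow τ)).add (tF.mul (tB.pow τ))).sub tendsto_const_nhds).sub tpoly)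
  have hval : η * δ * (1 / (η * β) * (1 + η * β) ^ τ + 0 * (0:ℝ) ^ τ - 1 / (η * β) - (τ : ℝ))
      = δ / β * ((1 + η * β) ^ τ - 1) - η * δ * (τ : ℝ) := by
    field_simp
    ring
  rw [hval] at tmain
  exact tmain.congr (fun γ => (hh γ τ).symm)
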